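/- Let S(λ) be a differentiable family of 2n×2n real symplectic matrices, and let P₃ = diag(-I, I). Then Ψ(S(λ)) ≥ 0 for all λ if and only if Ψ(P₃ S(λ)⁻¹ P₃) ≥ 0 for all λ, where Ψ(Z(λ)) := Jᵀ Z'(λ) Z(λ)⁻¹. In particular, Ψ(P₃ S(λ)⁻¹ P₃) = -P₃ Ψ(S(λ)⁻¹) P₃. -/

import Mathlib

open Matrix
noncomputable section

/-- The standard symplectic matrix `J = [[0, I], [-I, 0]]`. -/
def Jmat (k : Type*) [Fintype k] [DecidableEq k] : Matrix (k ⊕ k) (k ⊕ k) ℝ :=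
  fromBlocks 0 1 (-1) 0

/-- A matrix `S` is symplectic if `Sᵀ J S = J`. -/
def IsSymplectic {k : Type*} [Fintype k] [DecidableEq k]
    (S : Matrix (k ⊕ k) (k ⊕ k) ℝ) : Prop :=
  Sᵀ * Jmat k * S = Jmat k

/-- `S'` is the (entrywise) derivative family of the matrix family `S`. -/
def HasMatDeriv {k m : Type*} (S S' : ℝ → Matrix k m ℝ) : Prop :=
  ∀ (l : ℝ) (i : k) (j : m), HasDerivAt (fun t => S t i j) (S' l i j) l

/-- `Ψ(S(λ)) = Jᵀ S'(λ) S(λ)⁻¹`, where `S'` is a derivative family of `S`. -/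
def Psi {k : Type*} [Fintype k] [DecidableEq k]
    (S S' : ℝ → Matrix (k ⊕ k) (k ⊕ k) ℝ) (l : ℝ) : Matrix (k ⊕ k) (k ⊕ k) ℝ :=
  (Jmat k)ᵀ * S' l * (S l)⁻¹

/-- The block diagonal matrix `P₃ = diag(-I, I)`. -/
def P3mat (k : Type*) [Fintype k] [DecidableEq k] : Matrix (k ⊕ k) (k ⊕ k) ℝ :=
  fromBlocks (-1) 0 0 1

section Aux

set_option linter.unusedSectionVars false

variable {k : Type*} [Fintype k] [DecidableEq k]

lemma Jmat_mul_Jmat : Jmat k * Jmat k = -1 := by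
  simp only [Jmat, fromBlocks_multiply, fromBlocks_neg, ← fromBlocks_one]; norm_num

lemma Jmat_transpose : (Jmat k)ᵀ = -(Jmat k) := by
  simp only [Jmat, fromBlocks_transpose, fromBlocks_neg, transpose_zero, transpose_one,
    transpose_neg]; norm_num

lemma P3_mul_P3 : P3mat k * P3mat k = 1 := by
  simp [P3mat, fromBlocks_multiply, ← fromBlocks_one]

lemma P3_transpose : (P3mat k)ᵀ = P3mat k := by
  simp [P3mat, fromBlocks_transpose]

lemma P3_mul_Jmat : P3mat k * Jmat k = -(Jmat k * P3mat k) := by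
  simp only [P3mat, Jmat, fromBlocks_multiply, fromBlocks_neg]; norm_num

lemma P3_inv : (P3mat k)⁻¹ = P3mat k := inv_eq_left_inv P3_mul_P3

lemma Jt_mul_P3 : (Jmat k)ᵀ * P3mat k = -(P3mat k * (Jmat k)ᵀ) := by
  rw [Jmat_transpose]
  simp only [neg_mul, mul_neg, neg_neg, P3_mul_Jmat]

lemma matDeriv_mul {m p : Type*} [Fintype m] {A A' : ℝ → Matrix k m ℝ}
    {B B' : ℝ → Matrix m p ℝ} (hA : HasMatDeriv A A') (hB : HasMatDeriv B B') :
    HasMatDeriv (fun t => A t * B t) (fun t => A' t * B t + A t * B' t) := by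
  intro l i j
  have h1 : (fun t => (A t * B t) i j) = fun t => ∑ a, A t i a * B t a j := by
    funext t; simp [Matrix.mul_apply]
  have h2 : (A' l * B l + A l * B' l) i j
      = ∑ a, (A' l i a * B l a j + A l i a * B' l a j) := by
    simp [Matrix.mul_apply, Matrix.add_apply, Finset.sum_add_distrib]
  rw [h1]
  show HasDerivAt _ ((A' l * B l + A l * B' l) i j) l
  rw [h2]
  exact HasDerivAt.fun_sum fun a _ => (hA l i a).mul (hB l a j)

lemma matDeriv_const_mul_mul {m p q : Type*} [Fintype m] [Fintype p]
    (C : Matrix k m ℝ) (D : Matrix p q ℝ) {A A' : ℝ → Matrix m p ℝ}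
    (h : HasMatDeriv A A') :
    HasMatDeriv (fun t => C * A t * D) (fun t => C * A' t * D) := by
  intro l i j
  have h1 : (fun t => (C * A t * D) i j)
      = fun t => ∑ b, ∑ a, C i a * A t a b * D b j := by
    funext t; simp [Matrix.mul_apply, Finset.sum_mul]
  have h2 : (C * A' l * D) i j = ∑ b, ∑ a, C i a * A' l a b * D b j := by
    simp [Matrix.mul_apply, Finset.sum_mul]
  rw [h1]
  show HasDerivAt _ ((C * A' l * D) i j) l
  rw [h2]
  exact HasDerivAt.fun_sum fun b _ => HasDerivAt.fun_sum fun a _ =>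
    ((h l a b).const_mul (C i a)).mul_const (D b j)

lemma conj_helper (A B : Matrix (k ⊕ k) (k ⊕ k) ℝ) :
    (Jmat k)ᵀ * (P3mat k * A * P3mat k) * (P3mat k * B * P3mat k)
      = -(P3mat k * ((Jmat k)ᵀ * A * B) * P3mat k) := by
  have hc : ∀ X : Matrix (k ⊕ k) (k ⊕ k) ℝ, X * P3mat k * P3mat k = X := fun X => by
    rw [Matrix.mul_assoc, P3_mul_P3, Matrix.mul_one]
  calc (Jmat k)ᵀ * (P3mat k * A * P3mat k) * (P3mat k * B * P3mat k)
      = ((Jmat k)ᵀ * P3mat k) * A * P3mat k * P3mat k * B * P3mat k := by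
        simp only [Matrix.mul_assoc]
    _ = -(P3mat k * (Jmat k)ᵀ) * A * P3mat k * P3mat k * B * P3mat k := by
        rw [Jt_mul_P3]
    _ = -(P3mat k * (Jmat k)ᵀ * A * P3mat k * P3mat k * B * P3mat k) := by
        simp only [neg_mul]
    _ = -(P3mat k * (Jmat k)ᵀ * A * B * P3mat k) := by rw [hc]
    _ = -(P3mat k * ((Jmat k)ᵀ * A * B) * P3mat k) := by simp only [Matrix.mul_assoc]

end Aux

/-- `Ψ(S(λ)) ≥ 0` for all `λ` iff `Ψ(P₃ S(λ)⁻¹ P₃) ≥ 0` for all `λ`;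
moreover `Ψ(P₃ S(λ)⁻¹ P₃) = -P₃ Ψ(S(λ)⁻¹) P₃`. -/
theorem statement2 (n : ℕ) (S S' Si' T' : ℝ → Matrix (Fin n ⊕ Fin n) (Fin n ⊕ Fin n) ℝ)
    (hS : ∀ l, IsSymplectic (S l)) (hd : HasMatDeriv S S')
    (hdi : HasMatDeriv (fun l => (S l)⁻¹) Si')
    (hdp : HasMatDeriv (fun l => P3mat (Fin n) * (S l)⁻¹ * P3mat (Fin n)) T') :
    (∀ l, Psi (fun t => P3mat (Fin n) * (S t)⁻¹ * P3mat (Fin n)) T' l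
        = -(P3mat (Fin n) * Psi (fun t => (S t)⁻¹) Si' l * P3mat (Fin n))) ∧
    ((∀ l, (Psi S S' l).PosSemidef) ↔
      (∀ l, (Psi (fun t => P3mat (Fin n) * (S t)⁻¹ * P3mat (Fin n)) T' l).PosSemidef)) := by
  -- invertibility of S l
  have hleft : ∀ l, (-(Jmat (Fin n)) * (S l)ᵀ * Jmat (Fin n)) * S l = 1 := by
    intro l
    have h := hS l
    unfold IsSymplectic at h
    calc (-(Jmat (Fin n)) * (S l)ᵀ * Jmat (Fin n)) * S l
        = -(Jmat (Fin n)) * ((S l)ᵀ * Jmat (Fin n) * S l) := by simp only [Matrix.mul_assoc, neg_mul]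
      _ = -(Jmat (Fin n)) * Jmat (Fin n) := by rw [h]
      _ = 1 := by rw [neg_mul, Jmat_mul_Jmat, neg_neg]
  have hSu : ∀ l, IsUnit (S l).det := fun l =>
    Matrix.isUnit_det_of_left_inverse (hleft l)
  have hSinvS : ∀ l, (S l)⁻¹ * S l = 1 := fun l => nonsing_inv_mul _ (hSu l)
  have hSSinv : ∀ l, S l * (S l)⁻¹ = 1 := fun l => mul_nonsing_inv _ (hSu l)
  -- derivative identifications
  have hT : ∀ l, T' l = P3mat (Fin n) * Si' l * P3mat (Fin n) := by
    intro l
    ext i j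
    exact (hdp l i j).unique ((matDeriv_const_mul_mul (P3mat (Fin n)) (P3mat (Fin n)) hdi) l i j)
  have hSi : ∀ l, Si' l = -((S l)⁻¹ * S' l * (S l)⁻¹) := by
    intro l
    have h1 := matDeriv_mul hd hdi
    have h3 : S' l * (S l)⁻¹ + S l * Si' l = 0 := by
      ext i j
      have h := h1 l i j
      simp only [hSSinv] at h
      simp only [Matrix.zero_apply]
      exact h.unique (hasDerivAt_const l _)
    have h4 : S l * Si' l = -(S' l * (S l)⁻¹) := by
      rw [eq_neg_of_add_eq_zero_right h3]
    calc Si' l = ((S l)⁻¹ * S l) * Si' l := by rw [hSinvS, Matrix.one_mul]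
      _ = (S l)⁻¹ * (S l * Si' l) := by rw [Matrix.mul_assoc]
      _ = (S l)⁻¹ * (-(S' l * (S l)⁻¹)) := by rw [h4]
      _ = -((S l)⁻¹ * S' l * (S l)⁻¹) := by
          simp only [mul_neg, Matrix.mul_assoc]
  -- part 1
  have key : ∀ l, Psi (fun t => P3mat (Fin n) * (S t)⁻¹ * P3mat (Fin n)) T' l
      = -(P3mat (Fin n) * Psi (fun t => (S t)⁻¹) Si' l * P3mat (Fin n)) := by
    intro l
    have hinv : (P3mat (Fin n) * (S l)⁻¹ * P3mat (Fin n))⁻¹ = P3mat (Fin n) * S l * P3mat (Fin n) := by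
      rw [Matrix.mul_inv_rev, Matrix.mul_inv_rev, P3_inv,
        nonsing_inv_nonsing_inv _ (hSu l), Matrix.mul_assoc]
    show (Jmat (Fin n))ᵀ * T' l * (P3mat (Fin n) * (S l)⁻¹ * P3mat (Fin n))⁻¹
      = -(P3mat (Fin n) * ((Jmat (Fin n))ᵀ * Si' l * ((S l)⁻¹)⁻¹) * P3mat (Fin n))
    rw [hinv, hT l, nonsing_inv_nonsing_inv _ (hSu l)]
    exact conj_helper (Si' l) (S l)
  refine ⟨key, ?_⟩
  -- relation Jᵀ S⁻¹ = Sᵀ Jᵀ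
  have hrel : ∀ l, (Jmat (Fin n))ᵀ * (S l)⁻¹ = (S l)ᵀ * (Jmat (Fin n))ᵀ := by
    intro l
    have h : (S l)ᵀ * Jmat (Fin n) = Jmat (Fin n) * (S l)⁻¹ := by
      calc (S l)ᵀ * Jmat (Fin n) = (S l)ᵀ * Jmat (Fin n) * (S l * (S l)⁻¹) := by
            rw [hSSinv, Matrix.mul_one]
        _ = ((S l)ᵀ * Jmat (Fin n) * S l) * (S l)⁻¹ := by simp only [Matrix.mul_assoc]
        _ = Jmat (Fin n) * (S l)⁻¹ := by rw [show (S l)ᵀ * Jmat (Fin n) * S l = Jmat (Fin n) from hS l]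
    rw [Jmat_transpose, neg_mul, mul_neg, h]
  -- part 2 congruence
  have hc : ∀ l (X : Matrix (Fin n ⊕ Fin n) (Fin n ⊕ Fin n) ℝ), X * (S l)⁻¹ * S l = X := fun l X => by
    rw [Matrix.mul_assoc, hSinvS, Matrix.mul_one]
  have key2 : ∀ l, Psi (fun t => P3mat (Fin n) * (S t)⁻¹ * P3mat (Fin n)) T' l
      = (S l * P3mat (Fin n))ᵀ * Psi S S' l * (S l * P3mat (Fin n)) := by
    intro l
    rw [key l]
    show -(P3mat (Fin n) * ((Jmat (Fin n))ᵀ * Si' l * ((S l)⁻¹)⁻¹) * P3mat (Fin n))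
      = (S l * P3mat (Fin n))ᵀ * ((Jmat (Fin n))ᵀ * S' l * (S l)⁻¹) * (S l * P3mat (Fin n))
    rw [nonsing_inv_nonsing_inv _ (hSu l), hSi l, transpose_mul, P3_transpose]
    calc -(P3mat (Fin n) * ((Jmat (Fin n))ᵀ * -((S l)⁻¹ * S' l * (S l)⁻¹) * S l) * P3mat (Fin n))
        = P3mat (Fin n) * ((Jmat (Fin n))ᵀ * (S l)⁻¹) * S' l * (S l)⁻¹ * S l * P3mat (Fin n) := by
          simp only [mul_neg, neg_mul, neg_neg, Matrix.mul_assoc]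
      _ = P3mat (Fin n) * ((S l)ᵀ * (Jmat (Fin n))ᵀ) * S' l * (S l)⁻¹ * S l * P3mat (Fin n) := by
          rw [hrel l]
      _ = P3mat (Fin n) * (S l)ᵀ * ((Jmat (Fin n))ᵀ * S' l * (S l)⁻¹) * (S l * P3mat (Fin n)) := by
          simp only [Matrix.mul_assoc]
  -- invertibility of B = S l * P3
  have hPu : IsUnit (P3mat (Fin n)).det :=
    Matrix.isUnit_det_of_left_inverse (P3_mul_P3)
  have hBu : ∀ l, IsUnit (S l * P3mat (Fin n)).det := by
    intro l
    rw [Matrix.det_mul]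
    exact (hSu l).mul hPu
  constructor
  · intro hpsd l
    rw [key2 l, ← conjTranspose_eq_transpose_of_trivial]
    exact (hpsd l).conjTranspose_mul_mul_same _
  · intro hpsd l
    set B := S l * P3mat (Fin n) with hB
    have hBinv : B⁻¹ * B = 1 := nonsing_inv_mul _ (hBu l)
    have hM : Psi S S' l = (B⁻¹)ᵀ * (Bᵀ * Psi S S' l * B) * B⁻¹ := by
      calc Psi S S' l = ((B⁻¹)ᵀ * Bᵀ) * Psi S S' l * (B * B⁻¹) := by
            rw [← transpose_mul, mul_nonsing_inv _ (hBu l), transpose_one,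
              Matrix.one_mul, Matrix.mul_one]
        _ = (B⁻¹)ᵀ * (Bᵀ * Psi S S' l * B) * B⁻¹ := by simp only [Matrix.mul_assoc]
    rw [hM, ← conjTranspose_eq_transpose_of_trivial, ← key2 l]
    exact (hpsd l).conjTranspose_mul_mul_same _
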